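/- Formal power series core of the main theorem (Theorem 2.5): Let C_x, C_y, M₁, M₂, M_xy be formal power series over ℂ such that: C_x has zero constant and linear coefficients and nonzero quadratic coefficient; C_y has zero constant term and nonzero linear coefficient; M₁ has nonzero constant term; M₂ has zero constant term; M_xy − 1 has zero constant and linear coefficients and nonzero quadratic coefficient; and the combinatorial relations hold: M_xy = 1 + C_y∘(X·M₂), X·M₁·M₂ = (C_y∘(X·M₂))·M_xy, and X·M₁·M₂ = (C_x∘(X·M₁))·M_xy. Let χ be a formal power series with zero constant term satisfying (M_xy − 1)∘χ = X² (a √z-inverse of the moment series of the product), and let σ_y be the unique power series with zero constant term satisfying C_y∘σ_y = X (so σ_y(z) = z·S_y(z)). Then there exists a formal power series σ_x with zero constant term satisfying C_x∘σ_x = X² (so σ_x encodes z·S_x(z) at z = X²) such that X²·(1+X²)·χ(X) = σ_x(X)·σ_y(X²). (This identity is exactly S_xy(z) = S_x(z)·S_y(z) for the two S-transforms of xy.) -/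

import Mathlib

open PowerSeries

/-- Formal composition `F ∘ G` of power series over `ℂ`, intended for the case where
`G` has zero constant term (so that only finitely many terms contribute to each
coefficient). -/
noncomputable def comp (F G : PowerSeries ℂ) : PowerSeries ℂ :=
  PowerSeries.mk fun n =>
    PowerSeries.coeff n
      (∑ k ∈ Finset.range (n + 1), PowerSeries.C (PowerSeries.coeff k F) * G ^ k)

lemma coeff_pow_zero {h : PowerSeries ℂ} (hh : constantCoeff h = 0)
    {n k : ℕ} (hnk : n < k) : PowerSeries.coeff n (h ^ k) = 0 := by
  have hx : (X : PowerSeries ℂ) ^ k ∣ h ^ k :=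
    pow_dvd_pow_of_dvd (PowerSeries.X_dvd_iff.2 hh) k
  exact PowerSeries.X_pow_dvd_iff.1 hx n hnk

lemma coeff_comp (F h : PowerSeries ℂ) (n : ℕ) :
    PowerSeries.coeff n (comp F h)
      = ∑ k ∈ Finset.range (n + 1),
          PowerSeries.coeff k F * PowerSeries.coeff n (h ^ k) := by
  simp [comp, PowerSeries.coeff_mk, PowerSeries.coeff_C_mul]

lemma coeff_comp_ext (F h : PowerSeries ℂ) (hh : constantCoeff h = 0)
    {n m : ℕ} (hm : n < m) :
    PowerSeries.coeff n (comp F h)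
      = ∑ k ∈ Finset.range m,
          PowerSeries.coeff k F * PowerSeries.coeff n (h ^ k) := by
  rw [coeff_comp]
  apply Finset.sum_subset
  · intro k hk
    simp only [Finset.mem_range] at *
    omega
  · intro k hk hk2
    simp only [Finset.mem_range, not_lt] at *
    rw [coeff_pow_zero hh (by omega), mul_zero]

lemma coeff_eval₂ (p : Polynomial ℂ) (h : PowerSeries ℂ) (hh : constantCoeff h = 0)
    (n : ℕ) :
    PowerSeries.coeff n (Polynomial.eval₂ (PowerSeries.C) h p)
      = ∑ k ∈ Finset.range (n + 1),
          p.coeff k * PowerSeries.coeff n (h ^ k) := by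
  rw [Polynomial.eval₂_eq_sum, Polynomial.sum_def, map_sum]
  simp only [PowerSeries.coeff_C_mul]
  have h1 : ∑ k ∈ p.support, p.coeff k * PowerSeries.coeff n (h ^ k)
      = ∑ k ∈ p.support ∪ Finset.range (n+1), p.coeff k * PowerSeries.coeff n (h ^ k) := by
    apply Finset.sum_subset Finset.subset_union_left
    intro k _ hk
    rw [Polynomial.notMem_support_iff.1 hk, zero_mul]
  have h2 : ∑ k ∈ Finset.range (n+1), p.coeff k * PowerSeries.coeff n (h ^ k)
      = ∑ k ∈ p.support ∪ Finset.range (n+1), p.coeff k * PowerSeries.coeff n (h ^ k) := by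
    apply Finset.sum_subset Finset.subset_union_right
    intro k _ hk
    simp only [Finset.mem_range, not_lt] at hk
    rw [coeff_pow_zero hh (by omega), mul_zero]
  rw [h1, h2]

lemma coeff_comp_trunc (F h : PowerSeries ℂ) (hh : constantCoeff h = 0)
    {n m : ℕ} (hm : n < m) :
    PowerSeries.coeff n (comp F h)
      = PowerSeries.coeff n (Polynomial.eval₂ (PowerSeries.C) h (trunc m F)) := by
  rw [coeff_eval₂ _ h hh, coeff_comp]
  apply Finset.sum_congr rfl
  intro k hk
  simp only [Finset.mem_range] at hk
  rw [PowerSeries.coeff_trunc, if_pos (by omega)]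

lemma comp_add (F G h : PowerSeries ℂ) :
    comp (F + G) h = comp F h + comp G h := by
  ext n
  rw [map_add, coeff_comp, coeff_comp, coeff_comp, ← Finset.sum_add_distrib]
  apply Finset.sum_congr rfl
  intro k _
  rw [map_add, add_mul]

lemma comp_one (h : PowerSeries ℂ) (hh : constantCoeff h = 0) :
    comp 1 h = 1 := by
  ext n
  rw [coeff_comp]
  rw [Finset.sum_eq_single 0]
  · simp
  · intro k _ hk
    rw [PowerSeries.coeff_one, if_neg hk, zero_mul]
  · simp

lemma coeff_mul_trunc (F G : PowerSeries ℂ) {k m : ℕ} (hk : k < m) :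
    (trunc m F * trunc m G).coeff k = PowerSeries.coeff k (F * G) := by
  rw [Polynomial.coeff_mul, PowerSeries.coeff_mul]
  apply Finset.sum_congr rfl
  intro x hx
  rw [Finset.HasAntidiagonal.mem_antidiagonal] at hx
  rw [PowerSeries.coeff_trunc, PowerSeries.coeff_trunc, if_pos (by omega), if_pos (by omega)]

lemma comp_mul (F G h : PowerSeries ℂ) (hh : constantCoeff h = 0) :
    comp (F * G) h = comp F h * comp G h := by
  ext n
  rw [coeff_comp_trunc _ h hh (Nat.lt_succ_self n), PowerSeries.coeff_mul]
  have : ∀ p ∈ Finset.HasAntidiagonal.antidiagonal n,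
      PowerSeries.coeff p.1 (comp F h) * PowerSeries.coeff p.2 (comp G h)
      = PowerSeries.coeff p.1 (Polynomial.eval₂ (PowerSeries.C) h (trunc (n+1) F))
        * PowerSeries.coeff p.2 (Polynomial.eval₂ (PowerSeries.C) h (trunc (n+1) G)) := by
    intro p hp
    rw [Finset.HasAntidiagonal.mem_antidiagonal] at hp
    rw [coeff_comp_trunc _ h hh (m := n+1) (by omega),
        coeff_comp_trunc _ h hh (m := n+1) (by omega)]
  rw [Finset.sum_congr rfl this, ← PowerSeries.coeff_mul, ← Polynomial.eval₂_mul]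
  rw [coeff_eval₂ _ h hh, coeff_eval₂ _ h hh]
  apply Finset.sum_congr rfl
  intro k hk
  simp only [Finset.mem_range] at hk
  rw [coeff_mul_trunc F G (by omega), PowerSeries.coeff_trunc, if_pos (by omega)]

lemma comp_pow (g h : PowerSeries ℂ) (hh : constantCoeff h = 0) (k : ℕ) :
    comp (g ^ k) h = (comp g h) ^ k := by
  induction k with
  | zero => simpa using comp_one h hh
  | succ k ih => rw [pow_succ, pow_succ, comp_mul _ _ _ hh, ih]

lemma comp_X (h : PowerSeries ℂ) (hh : constantCoeff h = 0) :
    comp PowerSeries.X h = h := by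
  ext n
  rw [coeff_comp]
  rcases Nat.eq_zero_or_pos n with h0 | h0
  · subst h0
    simp [PowerSeries.coeff_zero_eq_constantCoeff, hh]
  · rw [Finset.sum_eq_single 1]
    · simp
    · intro k _ hk
      rw [PowerSeries.coeff_X, if_neg hk, zero_mul]
    · intro hmem
      simp only [Finset.mem_range, not_lt] at hmem
      omega

lemma constantCoeff_comp (F h : PowerSeries ℂ) (hh : constantCoeff h = 0) :
    constantCoeff (comp F h) = constantCoeff F := by
  rw [← PowerSeries.coeff_zero_eq_constantCoeff_apply, coeff_comp]
  simp

lemma comp_assoc (F g h : PowerSeries ℂ) (hg : constantCoeff g = 0)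
    (hh : constantCoeff h = 0) :
    comp (comp F g) h = comp F (comp g h) := by
  ext n
  rw [coeff_comp, coeff_comp]
  have h1 : ∀ k ∈ Finset.range (n+1),
      PowerSeries.coeff k (comp F g) * PowerSeries.coeff n (h ^ k)
      = ∑ j ∈ Finset.range (n+1),
          PowerSeries.coeff j F * (PowerSeries.coeff k (g ^ j)
            * PowerSeries.coeff n (h ^ k)) := by
    intro k hk
    simp only [Finset.mem_range] at hk
    rw [coeff_comp_ext F g hg (m := n+1) (by omega), Finset.sum_mul]
    simp [mul_assoc]
  rw [Finset.sum_congr rfl h1, Finset.sum_comm]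
  apply Finset.sum_congr rfl
  intro j _
  rw [← Finset.mul_sum, ← coeff_comp, comp_pow g h hh]

lemma coeff_pow_congr {v w : PowerSeries ℂ} (k : ℕ) {j : ℕ}
    (hvw : ∀ i ≤ j, PowerSeries.coeff i v = PowerSeries.coeff i w) :
    PowerSeries.coeff j (v ^ k) = PowerSeries.coeff j (w ^ k) := by
  induction k generalizing j with
  | zero => simp
  | succ k ih =>
    rw [pow_succ, pow_succ, PowerSeries.coeff_mul, PowerSeries.coeff_mul]
    apply Finset.sum_congr rfl
    intro p hp
    rw [Finset.HasAntidiagonal.mem_antidiagonal] at hp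
    rw [ih (fun i hi => hvw i (by omega)), hvw p.2 (by omega)]

lemma coeff_pow_congr_lt {v w : PowerSeries ℂ}
    (hv : constantCoeff v = 0) (hw : constantCoeff w = 0) {n : ℕ}
    (hvw : ∀ i < n, PowerSeries.coeff i v = PowerSeries.coeff i w)
    {k : ℕ} (hk : 2 ≤ k) :
    PowerSeries.coeff n (v ^ k) = PowerSeries.coeff n (w ^ k) := by
  obtain ⟨k, rfl⟩ : ∃ m, k = m + 1 := ⟨k - 1, by omega⟩
  have hk1 : 1 ≤ k := by omega
  rw [pow_succ, pow_succ, PowerSeries.coeff_mul, PowerSeries.coeff_mul]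
  apply Finset.sum_congr rfl
  intro p hp
  rw [Finset.HasAntidiagonal.mem_antidiagonal] at hp
  rcases Nat.eq_zero_or_pos p.1 with h1 | h1
  · rw [h1]
    rw [show PowerSeries.coeff 0 (v ^ k) = 0 by
      rw [PowerSeries.coeff_zero_eq_constantCoeff, map_pow, hv, zero_pow (by omega)]]
    rw [show PowerSeries.coeff 0 (w ^ k) = 0 by
      rw [PowerSeries.coeff_zero_eq_constantCoeff, map_pow, hw, zero_pow (by omega)]]
    rw [zero_mul, zero_mul]
  rcases Nat.eq_zero_or_pos p.2 with h2 | h2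
  · rw [h2, PowerSeries.coeff_zero_eq_constantCoeff, hv, hw, mul_zero, mul_zero]
  · rw [coeff_pow_congr k (fun i hi => hvw i (by omega)), hvw p.2 (by omega)]

lemma comp_left_inj {c v w : PowerSeries ℂ}
    (hc1 : PowerSeries.coeff 1 c ≠ 0)
    (hv : constantCoeff v = 0) (hw : constantCoeff w = 0)
    (h : comp c v = comp c w) : v = w := by
  ext n
  induction n using Nat.strong_induction_on with
  | _ n ih =>
    rcases Nat.eq_zero_or_pos n with h0 | h0
    · subst h0; simp [PowerSeries.coeff_zero_eq_constantCoeff, hv, hw]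
    have hsum := congrArg (PowerSeries.coeff n) h
    rw [coeff_comp, coeff_comp] at hsum
    have key : ∀ k ∈ Finset.range (n+1), k ≠ 1 →
        PowerSeries.coeff k c * PowerSeries.coeff n (v ^ k)
        = PowerSeries.coeff k c * PowerSeries.coeff n (w ^ k) := by
      intro k _ hk1
      rcases Nat.eq_zero_or_pos k with hk0 | hk0
      · subst hk0; simp
      · rw [coeff_pow_congr_lt hv hw ih (by omega)]
    have h1 : PowerSeries.coeff 1 c * PowerSeries.coeff n v
        = PowerSeries.coeff 1 c * PowerSeries.coeff n w := by
      have e1 : (1 : ℕ) ∈ Finset.range (n+1) := Finset.mem_range.2 (by omega)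
      rw [← Finset.add_sum_erase _ _ e1, ← Finset.add_sum_erase _ _ e1] at hsum
      have h2 : ∑ k ∈ (Finset.range (n+1)).erase 1,
          PowerSeries.coeff k c * PowerSeries.coeff n (v ^ k)
          = ∑ k ∈ (Finset.range (n+1)).erase 1,
          PowerSeries.coeff k c * PowerSeries.coeff n (w ^ k) := by
        apply Finset.sum_congr rfl
        intro k hk
        exact key k (Finset.mem_of_mem_erase hk) (Finset.ne_of_mem_erase hk)
      rw [h2] at hsum
      have := add_right_cancel hsum
      simpa using this
    exact mul_left_cancel₀ hc1 h1

/-- Formal power series core of the main theorem (Theorem 2.5),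
`S_{xy}(z) = S_x(z)·S_y(z)` for `x` with vanishing mean: under the combinatorial
relations (1)–(3) of the paper between the series `C_x`, `C_y`, `M₁`, `M₂`, `M_{xy}`,
if `χ` is a `√z`-inverse of the moment series `M_{xy} − 1` and `σ_y = z·S_y(z)` is the
inverse of `C_y`, then there is a series `σ_x` with `C_x ∘ σ_x = X²` (encoding
`z·S_x(z)` at `z = X²`) with `X²·(1+X²)·χ(X) = σ_x(X)·σ_y(X²)`. -/
theorem stmt_11 (Cx Cy M₁ M₂ Mxy χ σy : PowerSeries ℂ)
    (hCx0 : PowerSeries.coeff 0 Cx = 0)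
    (hCx1 : PowerSeries.coeff 1 Cx = 0)
    (hCx2 : PowerSeries.coeff 2 Cx ≠ 0)
    (hCy0 : PowerSeries.constantCoeff Cy = 0)
    (hCy1 : PowerSeries.coeff 1 Cy ≠ 0)
    (hM₁ : PowerSeries.constantCoeff M₁ ≠ 0)
    (hM₂ : PowerSeries.constantCoeff M₂ = 0)
    (hMxy0 : PowerSeries.coeff 0 (Mxy - 1) = 0)
    (hMxy1 : PowerSeries.coeff 1 (Mxy - 1) = 0)
    (hMxy2 : PowerSeries.coeff 2 (Mxy - 1) ≠ 0)
    (heq1 : Mxy = 1 + comp Cy (PowerSeries.X * M₂))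
    (heq2 : PowerSeries.X * M₁ * M₂ = comp Cy (PowerSeries.X * M₂) * Mxy)
    (heq3 : PowerSeries.X * M₁ * M₂ = comp Cx (PowerSeries.X * M₁) * Mxy)
    (hχ0 : PowerSeries.constantCoeff χ = 0)
    (hχ : comp (Mxy - 1) χ = PowerSeries.X ^ 2)
    (hσy0 : PowerSeries.constantCoeff σy = 0)
    (hσy : comp Cy σy = PowerSeries.X) :
    ∃ σx : PowerSeries ℂ, PowerSeries.constantCoeff σx = 0 ∧
      comp Cx σx = PowerSeries.X ^ 2 ∧
      PowerSeries.X ^ 2 * (1 + PowerSeries.X ^ 2) * χ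
        = σx * comp σy (PowerSeries.X ^ 2) := by
  have hM0 : constantCoeff Mxy = 1 := by
    rw [map_sub] at hMxy0
    simpa [PowerSeries.coeff_zero_eq_constantCoeff, sub_eq_zero] using hMxy0
  have hMne : Mxy ≠ 0 := by
    intro h; rw [h, map_zero] at hM0; exact one_ne_zero hM0.symm
  have hψ : comp Cy (PowerSeries.X * M₂) = Mxy - 1 := by rw [heq1]; ring
  have hccXM₁ : constantCoeff (PowerSeries.X * M₁) = 0 := by simp
  have hccXM₂ : constantCoeff (PowerSeries.X * M₂) = 0 := by simp
  have hCxψ : comp Cx (PowerSeries.X * M₁) = Mxy - 1 := by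
    have h := mul_right_cancel₀ hMne (heq3.symm.trans heq2)
    rw [h, hψ]
  set u := comp (PowerSeries.X * M₁) χ with hu
  set v := comp (PowerSeries.X * M₂) χ with hv
  have hu0 : constantCoeff u = 0 := by rw [hu, constantCoeff_comp _ _ hχ0, hccXM₁]
  have hv0 : constantCoeff v = 0 := by rw [hv, constantCoeff_comp _ _ hχ0, hccXM₂]
  have hCxu : comp Cx u = PowerSeries.X ^ 2 := by
    rw [hu, ← comp_assoc Cx _ χ hccXM₁ hχ0, hCxψ, hχ]
  have hCyv : comp Cy v = PowerSeries.X ^ 2 := by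
    rw [hv, ← comp_assoc Cy _ χ hccXM₂ hχ0, hψ, hχ]
  have hX2 : constantCoeff ((PowerSeries.X : PowerSeries ℂ) ^ 2) = 0 := by simp
  have hσ2 : constantCoeff (comp σy (PowerSeries.X ^ 2)) = 0 := by
    rw [constantCoeff_comp _ _ hX2, hσy0]
  have hCyσ : comp Cy (comp σy (PowerSeries.X ^ 2)) = PowerSeries.X ^ 2 := by
    rw [← comp_assoc Cy σy _ hσy0 hX2, hσy, comp_X _ hX2]
  have hveq : v = comp σy (PowerSeries.X ^ 2) :=
    comp_left_inj hCy1 hv0 hσ2 (hCyv.trans hCyσ.symm)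
  refine ⟨u, hu0, hCxu, ?_⟩
  rw [← hveq, hu, hv, ← comp_mul _ _ _ hχ0]
  have hprod : (PowerSeries.X * M₁) * (PowerSeries.X * M₂)
      = PowerSeries.X * ((Mxy - 1) + (Mxy - 1) * (Mxy - 1)) := by
    have h4 : PowerSeries.X * M₁ * M₂ = (Mxy - 1) * Mxy := by rw [heq2, hψ]
    calc (PowerSeries.X * M₁) * (PowerSeries.X * M₂)
        = PowerSeries.X * (PowerSeries.X * M₁ * M₂) := by ring
      _ = PowerSeries.X * ((Mxy - 1) * Mxy) := by rw [h4]
      _ = PowerSeries.X * ((Mxy - 1) + (Mxy - 1) * (Mxy - 1)) := by ring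
  rw [hprod, comp_mul _ _ _ hχ0, comp_add, comp_mul _ _ _ hχ0, comp_X _ hχ0, hχ]
  ring
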